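/- Let N ≥ 1, let A ⊆ ℝ^N be not relatively compact (equivalently, unbounded), and let α : [0, ∞) → [1, ∞) be a continuous increasing function. Then there exists a function w : ℝ^N → ℝ that is infinitely differentiable on ℝ^N, belongs to L^p(ℝ^N) for every real p ∈ [1, ∞), and has growth α through A, i.e. limsup_{x ∈ A, ‖x‖ → ∞} |w(x)| / α(‖x‖) = +∞ (explicitly: for every C > 0 and every R > 0 there exists x ∈ A with ‖x‖ > R and |w(x)| > C · α(‖x‖)). -/

import Mathlib

open MeasureTheory Filter Topology

noncomputable section

/-- Euclidean space `ℝ^N`. -/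
abbrev RN (N : ℕ) := EuclideanSpace ℝ (Fin N)

/-- The space `X = C^∞(ℝ^N) ∩ ⋂_{p ∈ [1,∞)} L^p(ℝ^N)` of infinitely differentiable
functions that are `p`-integrable for every real `p ≥ 1`. -/
def SmoothIntegrable (N : ℕ) : Set (RN N → ℝ) :=
  {f | ContDiff ℝ (⊤ : ℕ∞) f ∧
       ∀ p : ℝ, 1 ≤ p → MemLp f (ENNReal.ofReal p) volume}

/-- `f` is unbounded on `A`, i.e. `sup_{x ∈ A} |f x| = +∞`. -/
def UnboundedOn {N : ℕ} (A : Set (RN N)) (f : RN N → ℝ) : Prop :=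
  ∀ C : ℝ, ∃ x ∈ A, C < |f x|

/-- `nBC∞I(A) = {f ∈ X : f is unbounded on A}`. -/
def nBCI {N : ℕ} (A : Set (RN N)) : Set (RN N → ℝ) :=
  {f | f ∈ SmoothIntegrable N ∧ UnboundedOn A f}

/-- `f` has growth `α` through `A`:
`limsup_{x ∈ A, ‖x‖ → ∞} |f x| / α ‖x‖ = +∞`. -/
def HasGrowth {N : ℕ} (A : Set (RN N)) (α : ℝ → ℝ) (f : RN N → ℝ) : Prop :=
  ∀ C : ℝ, 0 < C → ∀ R : ℝ, 0 < R → ∃ x ∈ A, R < ‖x‖ ∧ C * α ‖x‖ < |f x|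

open scoped ENNReal

/-- Auxiliary: from an unbounded set, extract a sequence with rapidly growing norms. -/
private lemma exists_growth_seq {E : Type*} [NormedAddCommGroup E] {A : Set E}
    (h : ∀ R : ℝ, ∃ a, a ∈ A ∧ R < ‖a‖) :
    ∃ x : ℕ → E, (∀ n, x n ∈ A) ∧ 3 < ‖x 0‖ ∧ ∀ n, ‖x n‖ + 4 < ‖x (n + 1)‖ := by
  choose f hfA hf using h
  refine ⟨fun n => Nat.rec (f 3) (fun _ p => f (‖p‖ + 4)) n, fun n => ?_, hf 3, fun n => hf _⟩
  cases n with
  | zero => exact hfA 3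
  | succ k => exact hfA _

/-- Auxiliary: a series of extended nonnegative reals whose terms are eventually dominated
by `(1/2)^n` and are all finite has finite sum. -/
private lemma tsum_ne_top_of_eventually_le_geometric (t : ℕ → ℝ≥0∞) (m : ℕ)
    (hfin : ∀ n, t n ≠ ⊤) (hterm : ∀ n, m ≤ n → t n ≤ ENNReal.ofReal ((1 / 2) ^ n)) :
    (∑' n, t n) ≠ ⊤ := by
  have hsplit : (∑ i ∈ Finset.range m, t i) + ∑' i, t (i + m) = ∑' i, t i :=
    Summable.sum_add_tsum_nat_add' ENNReal.summable
  rw [← hsplit]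
  have hfin' : (∑ i ∈ Finset.range m, t i) ≠ ⊤ := by
    exact (ENNReal.sum_lt_top.2 fun i _ => (hfin i).lt_top).ne
  have htail : (∑' i, t (i + m)) ≠ ⊤ := by
    have hle : (∑' i, t (i + m)) ≤ ∑' i : ℕ, ENNReal.ofReal ((1 / 2) ^ (i + m)) :=
      ENNReal.tsum_le_tsum fun i => hterm (i + m) (Nat.le_add_left m i)
    have hle2 : (∑' i : ℕ, ENNReal.ofReal ((1 / 2) ^ (i + m))) ≤
        ∑' i : ℕ, ENNReal.ofReal ((1 / 2) ^ i) := by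
      refine ENNReal.tsum_le_tsum fun i => ENNReal.ofReal_le_ofReal ?_
      exact pow_le_pow_of_le_one (by norm_num) (by norm_num) (Nat.le_add_right i m)
    have hgeo : (∑' i : ℕ, ENNReal.ofReal ((1 / 2) ^ i)) = (1 - ENNReal.ofReal (1 / 2))⁻¹ := by
      rw [← ENNReal.tsum_geometric]
      exact tsum_congr fun i => (ENNReal.ofReal_pow (by norm_num) i)
    have hne : (1 - ENNReal.ofReal (1 / 2))⁻¹ ≠ ⊤ := by
      rw [ENNReal.inv_ne_top]
      intro hzero
      have h12 : ENNReal.ofReal (1 / 2) < 1 := by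
        rw [← ENNReal.ofReal_one]
        exact ENNReal.ofReal_lt_ofReal_iff_of_nonneg (by norm_num) |>.2 (by norm_num)
      have := tsub_pos_of_lt h12
      rw [hzero] at this
      exact lt_irrefl 0 this
    exact ((hle.trans hle2).trans_lt (hgeo ▸ hne.lt_top)).ne
  exact ENNReal.add_ne_top.2 ⟨hfin', htail⟩

set_option maxHeartbeats 2000000 in
/-- For any not relatively compact `A ⊆ ℝ^N` and any continuous
increasing `α : [0,∞) → [1,∞)` there is a smooth function, `p`-integrable for all
`p ∈ [1,∞)`, which has growth `α` through `A`. -/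
theorem exists_smooth_integrable_with_growth (N : ℕ) (hN : 1 ≤ N)
    (A : Set (RN N)) (hA : ¬ Bornology.IsBounded A)
    (α : ℝ → ℝ) (hα_cont : ContinuousOn α (Set.Ici 0))
    (hα_mono : MonotoneOn α (Set.Ici 0))
    (hα_ge : ∀ x ∈ Set.Ici (0 : ℝ), 1 ≤ α x) :
    ∃ w : RN N → ℝ, w ∈ SmoothIntegrable N ∧ HasGrowth A α w := by
  classical
  have hA' : ∀ R : ℝ, ∃ a, a ∈ A ∧ R < ‖a‖ := by
    intro R
    by_contra h
    push_neg at h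
    exact hA (isBounded_iff_forall_norm_le.2 ⟨R, h⟩)
  obtain ⟨x, hxA, hx0, hxs⟩ := exists_growth_seq hA'
  -- basic facts about the sequence
  have hmono : ∀ m n : ℕ, m < n → ‖x m‖ + 4 ≤ ‖x n‖ := by
    intro m n h
    induction n with
    | zero => omega
    | succ k ih =>
      rcases Nat.lt_succ_iff_lt_or_eq.1 h with h' | h'
      · have := ih h'
        have := hxs k
        linarith
      · subst h'
        linarith [hxs m]
  have hxlow : ∀ n : ℕ, (n : ℝ) < ‖x n‖ := by
    intro n
    induction n with
    | zero => push_cast; linarith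
    | succ k ih =>
      have := hxs k
      push_cast
      linarith
  have hxnn : ∀ n, (0 : ℝ) ≤ ‖x n‖ := fun n => norm_nonneg _
  have hsep : ∀ m n : ℕ, m ≠ n → 3 < dist (x m) (x n) := by
    have key : ∀ m n : ℕ, m < n → 3 < dist (x m) (x n) := by
      intro m n h
      have h4 := hmono m n h
      have : ‖x n‖ - ‖x m‖ ≤ ‖x n - x m‖ := by
        have := abs_norm_sub_norm_le (x n) (x m)
        have := le_abs_self (‖x n‖ - ‖x m‖)
        linarith
      rw [dist_comm, dist_eq_norm]
      linarith
    intro m n hmn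
    rcases hmn.lt_or_gt with h | h
    · exact key m n h
    · rw [dist_comm]; exact key n m h
  -- the heights and radii
  set Vb : ℝ≥0∞ := volume (Metric.ball (0 : RN N) 1) with hVbdef
  have hVbt : Vb ≠ ⊤ := measure_ball_lt_top.ne
  set Vr : ℝ := Vb.toReal with hVrdef
  have hVr : 0 ≤ Vr := ENNReal.toReal_nonneg
  set c : ℕ → ℝ := fun n => (n + 1) * α ‖x n‖ with hcdef
  have hα1 : ∀ n, 1 ≤ α ‖x n‖ := fun n => hα_ge _ (hxnn n)
  have hc1 : ∀ n, 1 ≤ c n := by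
    intro n
    have h1 := hα1 n
    have h2 : (1 : ℝ) ≤ (n : ℝ) + 1 := by
      have := Nat.cast_nonneg (α := ℝ) n
      linarith
    calc (1 : ℝ) = 1 * 1 := by ring
    _ ≤ ((n : ℝ) + 1) * α ‖x n‖ := by nlinarith
  have hcpow : ∀ n, (0 : ℝ) < c n ^ n := fun n => pow_pos (lt_of_lt_of_le one_pos (hc1 n)) n
  set r : ℕ → ℝ := fun n => min (1 / 2) ((1 / 2) ^ n / (c n ^ n * (Vr + 1))) with hrdef
  have hr0 : ∀ n, 0 < r n := by
    intro n
    refine lt_min (by norm_num) ?_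
    have := hcpow n
    positivity
  have hrhalf : ∀ n, r n ≤ 1 / 2 := fun n => min_le_left _ _
  have hrbound : ∀ n, r n * (c n ^ n * (Vr + 1)) ≤ (1 / 2) ^ n := by
    intro n
    have hpos : 0 < c n ^ n * (Vr + 1) := by have := hcpow n; positivity
    have := min_le_right (1 / 2 : ℝ) ((1 / 2) ^ n / (c n ^ n * (Vr + 1)))
    calc r n * (c n ^ n * (Vr + 1)) ≤ (1 / 2) ^ n / (c n ^ n * (Vr + 1)) * (c n ^ n * (Vr + 1)) := by
          apply mul_le_mul_of_nonneg_right this hpos.le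
    _ = (1 / 2) ^ n := div_mul_cancel₀ _ hpos.ne'
  -- the bump functions
  set B : ∀ n : ℕ, ContDiffBump (x n) := fun n =>
    ⟨r n / 2, r n, by linarith [hr0 n], by linarith [hr0 n]⟩ with hBdef
  have hBout : ∀ n, (B n).rOut = r n := fun n => rfl
  have hBin : ∀ n, (B n).rIn = r n / 2 := fun n => rfl
  set w : RN N → ℝ := fun z => ∑' n, c n * B n z with hwdef
  have hBzero : ∀ n z, r n ≤ dist z (x n) → B n z = 0 := by
    intro n z h
    exact (B n).zero_of_le_dist h
  -- key pointwise identities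
  have hw_mem : ∀ n z, z ∈ Metric.ball (x n) (r n) → w z = c n * B n z := by
    intro n z hz
    refine tsum_eq_single n ?_
    intro m hmn
    rw [Metric.mem_ball] at hz
    have h3 : 3 < dist (x m) (x n) := hsep m n hmn
    have htri : dist (x m) (x n) ≤ dist (x m) z + dist z (x n) := dist_triangle _ _ _
    have h4 : r m ≤ dist z (x m) := by
      rw [dist_comm z (x m)]
      have := hrhalf m
      have := hrhalf n
      linarith
    rw [hBzero m z h4, mul_zero]
  have hw_zero : ∀ z, (∀ n, r n ≤ dist z (x n)) → w z = 0 := by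
    intro z hz
    have h0 : ∀ n, c n * B n z = 0 := fun n => by rw [hBzero n z (hz n), mul_zero]
    calc w z = ∑' n, (0 : ℝ) := tsum_congr h0
    _ = 0 := tsum_zero
  have hw_center : ∀ n, w (x n) = c n := by
    intro n
    rw [hw_mem n (x n) (Metric.mem_ball_self (hr0 n)),
      (B n).one_of_mem_closedBall (Metric.mem_closedBall_self (by rw [hBin n]; linarith [hr0 n])), mul_one]
  -- smoothness
  have hsmooth : ContDiff ℝ (⊤ : ℕ∞) w := by
    rw [contDiff_iff_contDiffAt]
    intro y
    by_cases h : ∃ n, dist y (x n) < 3 / 2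
    · obtain ⟨n, hn⟩ := h
      have heq : ∀ z ∈ Metric.ball y 1, w z = c n * B n z := by
        intro z hz
        rw [Metric.mem_ball] at hz
        refine tsum_eq_single n fun m hmn => ?_
        have hm : 3 / 2 ≤ dist y (x m) := by
          by_contra h'
          push_neg at h'
          have h3 := hsep n m (fun e => hmn e.symm)
          have htri : dist (x n) (x m) ≤ dist (x n) y + dist y (x m) := dist_triangle _ _ _
          rw [dist_comm (x n) y] at htri
          linarith
        have htri : dist y (x m) ≤ dist y z + dist z (x m) := dist_triangle _ _ _
        rw [dist_comm z y] at hz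
        have h4 : r m ≤ dist z (x m) := by
          have := hrhalf m
          linarith
        rw [hBzero m z h4, mul_zero]
      have hsm : ContDiffAt ℝ (⊤ : ℕ∞) (fun z => c n * B n z) y :=
        (contDiff_const.mul (B n).contDiff).contDiffAt
      exact hsm.congr_of_eventuallyEq
        (eventually_of_mem (Metric.ball_mem_nhds y one_pos) heq)
    · push_neg at h
      have heq : ∀ z ∈ Metric.ball y 1, w z = 0 := by
        intro z hz
        rw [Metric.mem_ball] at hz
        refine hw_zero z fun m => ?_
        have h3 := h m
        have htri : dist y (x m) ≤ dist y z + dist z (x m) := dist_triangle _ _ _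
        rw [dist_comm z y] at hz
        have := hrhalf m
        linarith
      exact contDiffAt_const.congr_of_eventuallyEq
        (eventually_of_mem (Metric.ball_mem_nhds y one_pos) heq)
  have hcont : Continuous w := hsmooth.continuous
  -- p-integrability
  have hmem : ∀ p : ℝ, 1 ≤ p → MemLp w (ENNReal.ofReal p) volume := by
    intro p hp
    have hp0 : 0 < p := lt_of_lt_of_le one_pos hp
    refine ⟨hcont.aestronglyMeasurable, ?_⟩
    rw [eLpNorm_eq_lintegral_rpow_enorm_toReal (by simp [hp0, hp0.le]) ENNReal.ofReal_ne_top,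
      ENNReal.toReal_ofReal hp0.le]
    refine ENNReal.rpow_lt_top_of_nonneg (by positivity) ?_
    set g : ℕ → RN N → ℝ≥0∞ := fun n =>
      (Metric.ball (x n) (r n)).indicator (fun _ => ENNReal.ofReal (c n ^ p)) with hgdef
    have hgmeas : ∀ n, AEMeasurable (g n) volume := fun n =>
      (measurable_const.indicator Metric.isOpen_ball.measurableSet).aemeasurable
    have hptw : ∀ a, (‖w a‖₊ : ℝ≥0∞) ^ p ≤ ∑' n, g n a := by
      intro a
      by_cases h : ∃ n, a ∈ Metric.ball (x n) (r n)
      · obtain ⟨n, hn⟩ := h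
        have hBn := (B n).nonneg (x := a)
        have hBl := (B n).le_one (x := a)
        have hcn := hc1 n
        have habs : |w a| ≤ c n := by
          rw [hw_mem n a hn, abs_of_nonneg (mul_nonneg (by linarith) hBn)]
          nlinarith
        calc (‖w a‖₊ : ℝ≥0∞) ^ p ≤ ENNReal.ofReal (c n) ^ p := by
              rw [← enorm_eq_nnnorm, Real.enorm_eq_ofReal_abs]
              exact ENNReal.rpow_le_rpow (ENNReal.ofReal_le_ofReal habs) hp0.le
        _ = ENNReal.ofReal (c n ^ p) := ENNReal.ofReal_rpow_of_nonneg (by linarith) hp0.le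
        _ = g n a := by rw [hgdef]; simp [Set.indicator_of_mem hn]
        _ ≤ ∑' m, g m a := ENNReal.le_tsum n
      · push_neg at h
        have hz : w a = 0 := hw_zero a fun n => by
          have := h n
          rw [Metric.mem_ball, not_lt] at this
          exact this
        simp [hz, ENNReal.zero_rpow_of_pos hp0]
    have hint : ∀ n, ∫⁻ a, g n a = ENNReal.ofReal (c n ^ p) * volume (Metric.ball (x n) (r n)) := by
      intro n
      rw [hgdef]
      exact lintegral_indicator_const Metric.isOpen_ball.measurableSet _
    have hvol : ∀ n, volume (Metric.ball (x n) (r n)) ≤ ENNReal.ofReal (r n ^ N) * Vb := by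
      intro n
      calc volume (Metric.ball (x n) (r n)) ≤ volume (Metric.closedBall (x n) (r n)) :=
            measure_mono Metric.ball_subset_closedBall
      _ = ENNReal.ofReal (r n ^ (Module.finrank ℝ (RN N))) * Vb :=
            Measure.addHaar_closedBall volume (x n) (hr0 n).le
      _ = ENNReal.ofReal (r n ^ N) * Vb := by rw [finrank_euclideanSpace_fin]
    set m : ℕ := ⌈p⌉₊ with hmdef
    have hterm : ∀ n : ℕ, m ≤ n →
        ENNReal.ofReal (c n ^ p) * volume (Metric.ball (x n) (r n)) ≤
          ENNReal.ofReal ((1 / 2) ^ n) := by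
      intro n hmn
      have hpn : p ≤ (n : ℝ) := le_trans (Nat.le_ceil p) (by exact_mod_cast hmn)
      have h1 : c n ^ p ≤ c n ^ n := by
        rw [← Real.rpow_natCast (c n) n]
        exact Real.rpow_le_rpow_of_exponent_le (hc1 n) hpn
      have hrn1 : r n ≤ 1 := le_trans (hrhalf n) (by norm_num)
      have h2 : r n ^ N ≤ r n := by
        calc r n ^ N ≤ r n ^ 1 := pow_le_pow_of_le_one (hr0 n).le hrn1 hN
        _ = r n := pow_one _
      have hVbeq : Vb = ENNReal.ofReal Vr := (ENNReal.ofReal_toReal hVbt).symm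
      calc ENNReal.ofReal (c n ^ p) * volume (Metric.ball (x n) (r n))
          ≤ ENNReal.ofReal (c n ^ p) * (ENNReal.ofReal (r n ^ N) * Vb) := by
            exact mul_le_mul_right (hvol n) _
      _ = ENNReal.ofReal (c n ^ p * (r n ^ N * Vr)) := by
            rw [hVbeq, ← ENNReal.ofReal_mul (pow_nonneg (hr0 n).le N),
              ← ENNReal.ofReal_mul (Real.rpow_nonneg (by linarith [hc1 n]) p)]
      _ ≤ ENNReal.ofReal ((1 / 2) ^ n) := by
            apply ENNReal.ofReal_le_ofReal
            have hrnn := (hr0 n).le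
            have hb := hrbound n
            have hcn := hcpow n
            have hs1 : r n ^ N * Vr ≤ r n * (Vr + 1) := by
              have i1 : r n ^ N * Vr ≤ r n * Vr := mul_le_mul_of_nonneg_right h2 hVr
              nlinarith
            calc c n ^ p * (r n ^ N * Vr) ≤ c n ^ n * (r n ^ N * Vr) :=
                  mul_le_mul_of_nonneg_right h1 (mul_nonneg (pow_nonneg hrnn N) hVr)
            _ ≤ c n ^ n * (r n * (Vr + 1)) := mul_le_mul_of_nonneg_left hs1 hcn.le
            _ = r n * (c n ^ n * (Vr + 1)) := by ring
            _ ≤ (1 / 2) ^ n := hb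
    have hcalc : ∫⁻ a, (‖w a‖₊ : ℝ≥0∞) ^ p ≤
        ∑' n, ENNReal.ofReal (c n ^ p) * volume (Metric.ball (x n) (r n)) := by
      calc ∫⁻ a, (‖w a‖₊ : ℝ≥0∞) ^ p ≤ ∫⁻ a, ∑' n, g n a := lintegral_mono hptw
      _ = ∑' n, ∫⁻ a, g n a := lintegral_tsum hgmeas
      _ = ∑' n, ENNReal.ofReal (c n ^ p) * volume (Metric.ball (x n) (r n)) :=
            tsum_congr hint
    have hfinal : (∑' n, ENNReal.ofReal (c n ^ p) * volume (Metric.ball (x n) (r n))) ≠ ⊤ := by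
      refine tsum_ne_top_of_eventually_le_geometric _ m (fun n => ?_) hterm
      exact (ENNReal.mul_lt_top ENNReal.ofReal_lt_top measure_ball_lt_top).ne
    exact (hcalc.trans_lt hfinal.lt_top).ne
  -- growth
  have hgrowth : HasGrowth A α w := by
    intro C hC R hR
    set n : ℕ := ⌈max C R⌉₊ with hndef
    have hn1 : C ≤ (n : ℝ) := le_trans (le_max_left _ _) (Nat.le_ceil _)
    have hn2 : R ≤ (n : ℝ) := le_trans (le_max_right _ _) (Nat.le_ceil _)
    refine ⟨x n, hxA n, lt_of_le_of_lt hn2 (hxlow n), ?_⟩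
    have hcn0 : 0 ≤ c n := by linarith [hc1 n]
    rw [hw_center n, abs_of_nonneg hcn0]
    have hα := hα1 n
    have : C * α ‖x n‖ < ((n : ℝ) + 1) * α ‖x n‖ := by nlinarith
    simpa [hcdef] using this
  exact ⟨w, ⟨hsmooth, hmem⟩, hgrowth⟩

end
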